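/- Let $X_1,\dots,X_n$ be i.i.d. random vectors in $\mathbb{R}^p$ with mean zero and covariance $\Sigma$, each with finite fourth moments, and let $S = \frac{1}{n}\sum_{k=1}^n X_k X_k^T$. Then the estimator $\hat{\mathbb{V}}(S) = \frac{1}{n(n-1)}\sum_{k=1}^n \|X_k X_k^T - S\|^2$ satisfies $\mathbb{E}[\hat{\mathbb{V}}(S)] = \mathbb{E}[\|S - \Sigma\|^2]$, where $\|A\|^2 = \mathrm{Tr}(AA^T)/p$. -/

import Mathlib

open Matrix Finset MeasureTheory ProbabilityTheory

/-- Normalized Frobenius inner product `⟨A,B⟩ = Tr(ABᵀ)/p`. -/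
noncomputable def mip {p : ℕ} (A B : Matrix (Fin p) (Fin p) ℝ) : ℝ :=
  Matrix.trace (A * Bᵀ) / p

/-- Outer product `x xᵀ`. -/
def outer {p : ℕ} (x : Fin p → ℝ) : Matrix (Fin p) (Fin p) ℝ :=
  Matrix.of fun i j => x i * x j



lemma key {Ω : Type*} [MeasurableSpace Ω] (μ : Measure Ω) [IsProbabilityMeasure μ]
    {n : ℕ} (hn : 2 ≤ n) (Z : Fin n → Ω → ℝ) (s m2 : ℝ)
    (hint : ∀ k, Integrable (Z k) μ)
    (hsq : ∀ k, Integrable (fun ω => Z k ω ^ 2) μ)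
    (hmean : ∀ k, ∫ ω, Z k ω ∂μ = s)
    (hm2 : ∀ k, ∫ ω, Z k ω ^ 2 ∂μ = m2)
    (hpi : ∀ k l, k ≠ l → Integrable (fun ω => Z k ω * Z l ω) μ)
    (hpe : ∀ k l, k ≠ l → ∫ ω, Z k ω * Z l ω ∂μ = s * s) :
    Integrable (fun ω => ∑ k, (Z k ω - (n:ℝ)⁻¹ * ∑ l, Z l ω)^2) μ ∧
    Integrable (fun ω => ((n:ℝ)⁻¹ * ∑ l, Z l ω - s)^2) μ ∧
    (∫ ω, ∑ k, (Z k ω - (n:ℝ)⁻¹ * ∑ l, Z l ω)^2 ∂μ = ((n:ℝ)-1) * (m2 - s*s)) ∧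
    (∫ ω, ((n:ℝ)⁻¹ * ∑ l, Z l ω - s)^2 ∂μ = (m2 - s*s) / n) := by
  have hn0 : (n:ℝ) ≠ 0 := by positivity
  have hTeq : ∀ ω, (∑ k, ∑ l, Z k ω * Z l ω) = (∑ l, Z l ω) * (∑ l, Z l ω) := by
    intro ω; rw [Finset.sum_mul_sum]
  -- pointwise identity 1
  have hP1 : ∀ ω, ∑ k, (Z k ω - (n:ℝ)⁻¹ * ∑ l, Z l ω)^2
      = (∑ k, Z k ω ^ 2) - (n:ℝ)⁻¹ * ∑ k, ∑ l, Z k ω * Z l ω := by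
    intro ω
    rw [hTeq ω]
    have e1 : ∑ k, (Z k ω - (n:ℝ)⁻¹ * ∑ l, Z l ω)^2
        = ∑ k, (Z k ω ^2 - 2 * (n:ℝ)⁻¹ * (∑ l, Z l ω) * Z k ω
            + ((n:ℝ)⁻¹ * ∑ l, Z l ω)^2) := by
      apply Finset.sum_congr rfl; intro k _; ring
    rw [e1, Finset.sum_add_distrib, Finset.sum_sub_distrib, ← Finset.mul_sum,
      Finset.sum_const, Finset.card_univ, Fintype.card_fin, nsmul_eq_mul]
    field_simp
    ring
  -- pointwise identity 2
  have hP2 : ∀ ω, ((n:ℝ)⁻¹ * ∑ l, Z l ω - s)^2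
      = ((n:ℝ)⁻¹)^2 * (∑ k, ∑ l, Z k ω * Z l ω)
        - 2 * s * (n:ℝ)⁻¹ * (∑ l, Z l ω) + s^2 := by
    intro ω; rw [hTeq ω]; ring
  -- integrability
  have hLint : Integrable (fun ω => ∑ l, Z l ω) μ :=
    integrable_finset_sum _ (fun k _ => hint k)
  have hQint : Integrable (fun ω => ∑ k, Z k ω ^ 2) μ :=
    integrable_finset_sum _ (fun k _ => hsq k)
  have hklint : ∀ k l : Fin n, Integrable (fun ω => Z k ω * Z l ω) μ := by
    intro k l
    by_cases h : k = l
    · subst h; simpa [pow_two] using hsq k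
    · exact hpi k l h
  have hTint : Integrable (fun ω => ∑ k, ∑ l, Z k ω * Z l ω) μ :=
    integrable_finset_sum _ (fun k _ => integrable_finset_sum _ (fun l _ => hklint k l))
  have hI1 : Integrable (fun ω => ∑ k, (Z k ω - (n:ℝ)⁻¹ * ∑ l, Z l ω)^2) μ := by
    rw [funext hP1]
    exact hQint.sub (hTint.const_mul _)
  have hf2 : Integrable (fun ω => ((n:ℝ)⁻¹)^2 * (∑ k, ∑ l, Z k ω * Z l ω)
      - 2 * s * (n:ℝ)⁻¹ * (∑ l, Z l ω)) μ :=
    (hTint.const_mul _).sub (hLint.const_mul _)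
  have hI2 : Integrable (fun ω => ((n:ℝ)⁻¹ * ∑ l, Z l ω - s)^2) μ := by
    rw [funext hP2]
    exact hf2.add (integrable_const _)
  -- integral values
  have hQval : ∫ ω, ∑ k, Z k ω ^ 2 ∂μ = (n:ℝ) * m2 := by
    rw [integral_finset_sum _ (fun k _ => hsq k)]
    simp [hm2]
  have hLval : ∫ ω, ∑ l, Z l ω ∂μ = (n:ℝ) * s := by
    rw [integral_finset_sum _ (fun k _ => hint k)]
    simp [hmean]
  have hklval : ∀ k l : Fin n, ∫ ω, Z k ω * Z l ω ∂μ
      = (s*s) + (if l = k then m2 - s*s else 0) := by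
    intro k l
    by_cases h : l = k
    · subst h
      rw [if_pos rfl,
        show (fun ω => Z l ω * Z l ω) = fun ω => Z l ω ^ 2 from
          funext fun ω => (pow_two _).symm, hm2]
      ring
    · rw [if_neg h, hpe k l (fun e => h e.symm)]; ring
  have hTval : ∫ ω, ∑ k, ∑ l, Z k ω * Z l ω ∂μ
      = (n:ℝ) * m2 + (n:ℝ) * ((n:ℝ)-1) * (s*s) := by
    rw [integral_finset_sum _ (fun k _ => integrable_finset_sum _ (fun l _ => hklint k l))]
    have : ∀ k : Fin n, ∫ ω, ∑ l, Z k ω * Z l ω ∂μ = m2 + ((n:ℝ)-1) * (s*s) := by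
      intro k
      rw [integral_finset_sum _ (fun l _ => hklint k l),
        Finset.sum_congr rfl (fun l _ => hklval k l),
        Finset.sum_add_distrib, Finset.sum_const, Finset.sum_ite_eq' univ k,
        if_pos (Finset.mem_univ k), Finset.card_univ, Fintype.card_fin, nsmul_eq_mul]
      ring
    rw [Finset.sum_congr rfl (fun k _ => this k), Finset.sum_const, Finset.card_univ,
      Fintype.card_fin, nsmul_eq_mul]
    ring
  have hV1 : ∫ ω, ∑ k, (Z k ω - (n:ℝ)⁻¹ * ∑ l, Z l ω)^2 ∂μ = ((n:ℝ)-1) * (m2 - s*s) := by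
    rw [funext hP1, integral_sub hQint (hTint.const_mul _), integral_const_mul,
      hQval, hTval]
    field_simp
    ring
  have hV2 : ∫ ω, ((n:ℝ)⁻¹ * ∑ l, Z l ω - s)^2 ∂μ = (m2 - s*s) / n := by
    rw [funext hP2, integral_add hf2 (integrable_const _),
      integral_sub (hTint.const_mul _) (hLint.const_mul _), integral_const_mul,
      integral_const_mul, hTval, hLval, integral_const]
    simp only [measure_univ, ENNReal.toReal_one, probReal_univ, smul_eq_mul, one_mul]
    field_simp
    ring
  exact ⟨hI1, hI2, hV1, hV2⟩

lemma mip_self {p : ℕ} (A : Matrix (Fin p) (Fin p) ℝ) :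
    mip A A = (∑ i, ∑ j, (A i j)^2) / p := by
  unfold mip
  congr 1
  simp [Matrix.trace, Matrix.mul_apply, Matrix.diag, Matrix.transpose_apply, pow_two]

lemma sum_swap3 {n p : ℕ} (f : Fin n → Fin p → Fin p → ℝ) :
    ∑ k, ∑ i, ∑ j, f k i j = ∑ i, ∑ j, ∑ k, f k i j := by
  rw [Finset.sum_comm]
  exact Finset.sum_congr rfl fun i _ => Finset.sum_comm

theorem stmt4 {Ω : Type*} [MeasurableSpace Ω] (μ : Measure Ω) [IsProbabilityMeasure μ]
    {p n : ℕ} (hp : 0 < p) (hn : 2 ≤ n)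
    (X : Fin n → Ω → Fin p → ℝ)
    (hmeas : ∀ k, Measurable (X k))
    (hindep : iIndepFun X μ)
    (hident : ∀ k, IdentDistrib (X k) (X ⟨0, by omega⟩) μ μ)
    (hmean : ∀ k i, ∫ ω, X k ω i ∂μ = 0)
    (Sig : Matrix (Fin p) (Fin p) ℝ)
    (hcov : ∀ k i j, ∫ ω, X k ω i * X k ω j ∂μ = Sig i j)
    (hmom4 : ∀ k i, Integrable (fun ω => (X k ω i) ^ 4) μ)
    (S : Ω → Matrix (Fin p) (Fin p) ℝ)
    (hS : ∀ ω, S ω = (n : ℝ)⁻¹ • ∑ k, outer (X k ω)) :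
    ∫ ω, (1 / (n * (n - 1) : ℝ)) *
        ∑ k, mip (outer (X k ω) - S ω) (outer (X k ω) - S ω) ∂μ
      = ∫ ω, mip (S ω - Sig) (S ω - Sig) ∂μ := by
  have hn0 : (n:ℝ) ≠ 0 := by positivity
  have hn1 : (n:ℝ) - 1 ≠ 0 := by
    have : (2:ℝ) ≤ n := by exact_mod_cast hn
    linarith
  have hp0 : (p:ℝ) ≠ 0 := by positivity
  -- basic measurability / integrability
  have hXm : ∀ (k : Fin n) (i : Fin p), Measurable (fun ω => X k ω i) :=
    fun k i => (measurable_pi_apply i).comp (hmeas k)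
  have hsq2 : ∀ (k : Fin n) (i : Fin p), Integrable (fun ω => X k ω i ^ 2) μ := by
    intro k i
    refine ((hmom4 k i).add (integrable_const 1)).mono'
      ((hXm k i).pow_const 2).aestronglyMeasurable
      (Filter.Eventually.of_forall fun ω => ?_)
    simp only [Pi.add_apply]
    rw [Real.norm_eq_abs, abs_of_nonneg (sq_nonneg _)]
    nlinarith [sq_nonneg (X k ω i ^ 2 - 1), sq_nonneg (X k ω i)]
  have hZint : ∀ (k : Fin n) (i j : Fin p),
      Integrable (fun ω => X k ω i * X k ω j) μ := by
    intro k i j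
    refine ((hsq2 k i).add (hsq2 k j)).mono'
      ((hXm k i).mul (hXm k j)).aestronglyMeasurable
      (Filter.Eventually.of_forall fun ω => ?_)
    simp only [Pi.add_apply]
    rw [Real.norm_eq_abs, abs_mul]
    nlinarith [sq_nonneg (|X k ω i| - |X k ω j|), sq_abs (X k ω i), sq_abs (X k ω j),
      abs_nonneg (X k ω i), abs_nonneg (X k ω j)]
  have hZsq : ∀ (k : Fin n) (i j : Fin p),
      Integrable (fun ω => (X k ω i * X k ω j) ^ 2) μ := by
    intro k i j
    refine ((hmom4 k i).add (hmom4 k j)).mono'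
      (((hXm k i).mul (hXm k j)).pow_const 2).aestronglyMeasurable
      (Filter.Eventually.of_forall fun ω => ?_)
    simp only [Pi.add_apply]
    rw [Real.norm_eq_abs, abs_of_nonneg (sq_nonneg _)]
    nlinarith [sq_nonneg (X k ω i ^ 2 - X k ω j ^ 2), sq_nonneg (X k ω i * X k ω j)]
  -- second moments are identical across k
  set M2 : Fin p → Fin p → ℝ :=
    fun i j => ∫ ω, (X ⟨0, by omega⟩ ω i * X ⟨0, by omega⟩ ω j) ^ 2 ∂μ with hM2
  have hm2e : ∀ (k : Fin n) (i j : Fin p),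
      ∫ ω, (X k ω i * X k ω j) ^ 2 ∂μ = M2 i j := by
    intro k i j
    have hg : Measurable (fun x : Fin p → ℝ => (x i * x j) ^ 2) :=
      ((measurable_pi_apply i).mul (measurable_pi_apply j)).pow_const 2
    simpa [Function.comp] using ((hident k).comp hg).integral_eq
  -- independence facts
  have hIF : ∀ (k l : Fin n), k ≠ l → ∀ (i j : Fin p),
      IndepFun (fun ω => X k ω i * X k ω j) (fun ω => X l ω i * X l ω j) μ := by
    intro k l hkl i j
    exact (hindep.indepFun hkl).comp
      ((measurable_pi_apply i).mul (measurable_pi_apply j))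
      ((measurable_pi_apply i).mul (measurable_pi_apply j))
  have hpi : ∀ (i j : Fin p) (k l : Fin n), k ≠ l →
      Integrable (fun ω => (X k ω i * X k ω j) * (X l ω i * X l ω j)) μ := by
    intro i j k l hkl
    exact (hIF k l hkl i j).integrable_mul (hZint k i j) (hZint l i j)
  have hpe : ∀ (i j : Fin p) (k l : Fin n), k ≠ l →
      ∫ ω, (X k ω i * X k ω j) * (X l ω i * X l ω j) ∂μ = Sig i j * Sig i j := by
    intro i j k l hkl
    have := (hIF k l hkl i j).integral_mul_eq_mul_integral (hZint k i j).aestronglyMeasurable (hZint l i j).aestronglyMeasurable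
    simpa [Pi.mul_apply, hcov] using this
  -- apply the key scalar lemma for each (i,j)
  have hkey := fun i j : Fin p =>
    key μ hn (fun k ω => X k ω i * X k ω j) (Sig i j) (M2 i j)
      (fun k => hZint k i j) (fun k => hZsq k i j) (fun k => hcov k i j)
      (fun k => hm2e k i j) (fun k l h => hpi i j k l h) (fun k l h => hpe i j k l h)
  -- rewrite the LHS integrand
  have hLfun : (fun ω => (1 / (n * (n - 1) : ℝ)) *
        ∑ k, mip (outer (X k ω) - S ω) (outer (X k ω) - S ω))
      = fun ω => ∑ i, ∑ j, (1 / ((n:ℝ) * ((n:ℝ) - 1)) * (p:ℝ)⁻¹) *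
          ∑ k, (X k ω i * X k ω j - (n:ℝ)⁻¹ * ∑ l, X l ω i * X l ω j)^2 := by
    funext ω
    have hentry : ∀ (k : Fin n) (i j : Fin p), (outer (X k ω) - S ω) i j
        = X k ω i * X k ω j - (n:ℝ)⁻¹ * ∑ l, X l ω i * X l ω j := by
      intro k i j
      simp [hS ω, outer, Matrix.sub_apply, Matrix.smul_apply, Matrix.sum_apply,
        smul_eq_mul]
    have e1 : ∑ k, mip (outer (X k ω) - S ω) (outer (X k ω) - S ω)
        = ∑ k, (∑ i, ∑ j,
            (X k ω i * X k ω j - (n:ℝ)⁻¹ * ∑ l, X l ω i * X l ω j)^2) / p := by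
      refine Finset.sum_congr rfl fun k _ => ?_
      rw [mip_self]
      congr 1
      exact Finset.sum_congr rfl fun i _ => Finset.sum_congr rfl fun j _ => by
        rw [hentry k i j]
    rw [e1, ← Finset.sum_div,
      sum_swap3 (fun k i j =>
        (X k ω i * X k ω j - (n:ℝ)⁻¹ * ∑ l, X l ω i * X l ω j)^2)]
    rw [show ∀ (a b A : ℝ), a * (A / b) = a * b⁻¹ * A from fun a b A => by ring,
      Finset.mul_sum]
    exact Finset.sum_congr rfl fun i _ => Finset.mul_sum _ _ _
  -- rewrite the RHS integrand
  have hRfun : (fun ω => mip (S ω - Sig) (S ω - Sig))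
      = fun ω => ∑ i, ∑ j, (p:ℝ)⁻¹ *
          ((n:ℝ)⁻¹ * (∑ l, X l ω i * X l ω j) - Sig i j)^2 := by
    funext ω
    have hentry : ∀ (i j : Fin p), (S ω - Sig) i j
        = (n:ℝ)⁻¹ * (∑ l, X l ω i * X l ω j) - Sig i j := by
      intro i j
      simp [hS ω, outer, Matrix.sub_apply, Matrix.smul_apply, Matrix.sum_apply,
        smul_eq_mul]
    rw [mip_self]
    simp only [Finset.sum_div]
    exact Finset.sum_congr rfl fun i _ => Finset.sum_congr rfl fun j _ => by
      rw [hentry i j]; ring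
  have hint1 : ∀ i j : Fin p, Integrable (fun ω =>
      (1 / ((n:ℝ) * ((n:ℝ) - 1)) * (p:ℝ)⁻¹) *
        ∑ k, (X k ω i * X k ω j - (n:ℝ)⁻¹ * ∑ l, X l ω i * X l ω j)^2) μ :=
    fun i j => ((hkey i j).1).const_mul _
  have hint2 : ∀ i j : Fin p, Integrable (fun ω =>
      (p:ℝ)⁻¹ * ((n:ℝ)⁻¹ * (∑ l, X l ω i * X l ω j) - Sig i j)^2) μ :=
    fun i j => ((hkey i j).2.1).const_mul _
  rw [hLfun, hRfun,
    integral_finset_sum _ (fun i _ => integrable_finset_sum _ fun j _ => hint1 i j),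
    integral_finset_sum _ (fun i _ => integrable_finset_sum _ fun j _ => hint2 i j)]
  refine Finset.sum_congr rfl fun i _ => ?_
  rw [integral_finset_sum _ (fun j _ => hint1 i j),
    integral_finset_sum _ (fun j _ => hint2 i j)]
  refine Finset.sum_congr rfl fun j _ => ?_
  rw [integral_const_mul, integral_const_mul, (hkey i j).2.2.1, (hkey i j).2.2.2]
  field_simp
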